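/- Consider the constraint matrix A with rows indexed by jobs j and columns by pairs (i,k) with 1 ≤ i ≤ k ≤ m, where a_{j,(i,k)} = 1 if |[i,k] ∩ [r'_j, d'_j]| ≥ p' and 0 otherwise, and assume all jobs have the same length p' and the jobs are ordered so that r'_1 < r'_2 < ⋯ < r'_n and d'_1 < d'_2 < ⋯ < d'_n. Then A is an interval matrix: in every column, the rows with entry 1 form a consecutive set of job indices. Concretely: if j_1 < j_2 < j_3 and a_{j_1,(i,k)} = a_{j_3,(i,k)} = 1, then a_{j_2,(i,k)} = 1. -/
import Mathlib

lemma Icc_inter_Icc_int (a b c e : ℤ) :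
    Finset.Icc a b ∩ Finset.Icc c e = Finset.Icc (max a c) (min b e) := by
  ext x; simp only [Finset.mem_inter, Finset.mem_Icc]; omega

/-- Lemma (`lem:unimodularity_of_SCM`, key step): with all jobs of the same length `p'`
and release/deadline indices strictly increasing, the constraint matrix
`a_{j,(i,k)} = 1 ⟺ |[i,k] ∩ [r'_j, d'_j]| ≥ p'` is an interval matrix: if
`j₁ < j₂ < j₃` and `a_{j₁,(i,k)} = a_{j₃,(i,k)} = 1` then `a_{j₂,(i,k)} = 1`. -/
theorem interval_matrix {n : ℕ} (r d : Fin n → ℤ) (p' : ℤ)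
    (hr : StrictMono r) (hd : StrictMono d)
    (hfeas : ∀ j, r j + p' - 1 ≤ d j)
    (i k : ℤ) (j₁ j₂ j₃ : Fin n) (h12 : j₁ < j₂) (h23 : j₂ < j₃)
    (h1 : p' ≤ ((Finset.Icc i k ∩ Finset.Icc (r j₁) (d j₁)).card : ℤ))
    (h3 : p' ≤ ((Finset.Icc i k ∩ Finset.Icc (r j₃) (d j₃)).card : ℤ)) :
    p' ≤ ((Finset.Icc i k ∩ Finset.Icc (r j₂) (d j₂)).card : ℤ) := by
  have hr12 := hr h12
  have hr23 := hr h23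
  have hd12 := hd h12
  have hd23 := hd h23
  have hf2 := hfeas j₂
  simp only [Icc_inter_Icc_int, Int.card_Icc] at h1 h3 ⊢
  omega
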